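/- Let (A_k)_{k≥0} be a nonnegative sequence of real numbers and γ > 0 such that A_k − A_{k+1} ≥ γ·A_{k+1}² for all k ≥ 0, A₁ ≤ 1.5/γ, and A₂ ≤ 1.5/(2γ). Then A_k ≤ (1.5/γ)·(1/k) for all k ≥ 1. -/

import Mathlib

/-- If `(A_k)` is a nonnegative real sequence with `A_k − A_{k+1} ≥ γ·A_{k+1}²` for all `k`,
`A₁ ≤ 1.5/γ` and `A₂ ≤ 1.5/(2γ)` for some `γ > 0`, then `A_k ≤ (1.5/γ)·(1/k)` for `k ≥ 1`. -/
theorem seq_one_over_k_bound (A : ℕ → ℝ) (hA : ∀ k : ℕ, 0 ≤ A k)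
    (γ : ℝ) (hγ : 0 < γ)
    (hrec : ∀ k : ℕ, A k - A (k + 1) ≥ γ * (A (k + 1)) ^ 2)
    (h1 : A 1 ≤ 1.5 / γ) (h2 : A 2 ≤ 1.5 / (2 * γ)) :
    ∀ k : ℕ, 1 ≤ k → A k ≤ (1.5 / γ) * (1 / (k : ℝ)) := by
  have main : ∀ k : ℕ, 2 ≤ k → A k ≤ (1.5 / γ) * (1 / (k : ℝ)) := by
    intro k hk
    induction k, hk using Nat.le_induction with
    | base =>
      rw [show ((2:ℕ):ℝ) = 2 by norm_num]
      rw [div_mul_eq_mul_div, mul_one_div, div_div]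
      linarith [h2]
    | succ n hn ih =>
      by_contra hcon
      push_neg at hcon
      have hn' : (2:ℝ) ≤ (n:ℝ) := by exact_mod_cast hn
      have hnp : (0:ℝ) < (n:ℝ) := by linarith
      have hnp1 : (0:ℝ) < ((n:ℝ) + 1) := by linarith
      have hcast : ((n+1 : ℕ) : ℝ) = (n:ℝ) + 1 := by push_cast; ring
      rw [hcast] at hcon
      have hAn1 : 0 ≤ A (n+1) := hA (n+1)
      have hrecn := hrec n
      have hsq : γ * ((1.5/γ) * (1/((n:ℝ)+1)))^2 ≤ γ * (A (n+1))^2 := by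
        have h0 : 0 ≤ (1.5/γ) * (1/((n:ℝ)+1)) := by positivity
        have := sq_le_sq' (by linarith : -(A (n+1)) ≤ (1.5/γ) * (1/((n:ℝ)+1)))
          (le_of_lt hcon)
        nlinarith
      have key : A n > (1.5/γ) * (1/(n:ℝ)) := by
        have h3 : A n ≥ A (n+1) + γ * (A (n+1))^2 := by linarith
        have h4 : A n > (1.5/γ) * (1/((n:ℝ)+1)) + γ * ((1.5/γ) * (1/((n:ℝ)+1)))^2 := by
          nlinarith
        have h5 : (1.5/γ) * (1/((n:ℝ)+1)) + γ * ((1.5/γ) * (1/((n:ℝ)+1)))^2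
            ≥ (1.5/γ) * (1/(n:ℝ)) := by
          rw [ge_iff_le, div_mul_eq_mul_div, mul_one_div, div_div]
          rw [div_le_iff₀ (by positivity)]
          have hγ' : γ ≠ 0 := ne_of_gt hγ
          field_simp
          ring_nf
          have hkey : 0 ≤ γ^3 * (((n:ℝ)-2)*((n:ℝ)+1)) :=
            mul_nonneg (pow_pos hγ 3).le (mul_nonneg (by linarith) (by linarith))
          nlinarith [hkey]
        linarith
      linarith [ih]
  intro k hk
  rcases eq_or_lt_of_le hk with h | h
  · rw [← h]; norm_num; linarith
  · exact main k h
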